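/- Let A, B, a, b be positive integers with a ∣ A and b ∣ B, and let G = ℤ_A × ℤ_B. If Λ ⊆ G is such that Q*_{a,b} + Λ tiles G, where Q*_{a,b} = [A/a] × [B/b], then Λ is a spectrum of the cube Q_{a,b} = [a] × [b]. -/
import Mathlib

open Finset Complex

/-- The cube `[a] × [b]` in `ℤ_A × ℤ_B`. -/
def cube2 (A B a b : ℕ) : Finset (ZMod A × ZMod B) :=
  Finset.image (fun v : Fin a × Fin b => (((v.1 : ℕ) : ZMod A), ((v.2 : ℕ) : ZMod B)))
    Finset.univ

/-- The character `e_λ(x) = exp(2πi(λ₁x₁/A + λ₂x₂/B))` on `ℤ_A × ℤ_B`. -/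
noncomputable def e2 (A B : ℕ) (lam x : ZMod A × ZMod B) : ℂ :=
  Complex.exp (2 * (Real.pi : ℂ) * Complex.I *
    ((lam.1.val : ℂ) * (x.1.val : ℂ) / (A : ℂ) + (lam.2.val : ℂ) * (x.2.val : ℂ) / (B : ℂ)))

/-- `Λ` is a spectrum of `E ⊆ ℤ_A × ℤ_B`. -/
def IsSpectrum2 (A B : ℕ) (E L : Finset (ZMod A × ZMod B)) : Prop :=
  L.card = E.card ∧
  ∀ l ∈ L, ∀ m ∈ L, l ≠ m →
    ∑ x ∈ E, e2 A B l x * (starRingEnd ℂ) (e2 A B m x) = 0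

/-- `E` tiles the abelian group `G` with translate set `T`. -/
def Tiles {G : Type*} [AddCommGroup G] (E T : Finset G) : Prop :=
  ∀ x : G, ∃! p : G × G, p.1 ∈ E ∧ p.2 ∈ T ∧ x = p.1 + p.2

/-! ### Roots of unity -/

noncomputable def ww (N : ℕ) : ℂ := Complex.exp (2 * Real.pi * Complex.I / N)

lemma ww_prim (N : ℕ) [NeZero N] : IsPrimitiveRoot (ww N) N :=
  Complex.isPrimitiveRoot_exp N (NeZero.ne N)

lemma ww_pow_eq_one_iff (N : ℕ) [NeZero N] (k : ℕ) : ww N ^ k = 1 ↔ N ∣ k :=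
  (ww_prim N).pow_eq_one_iff_dvd k

lemma ww_pow_N (N : ℕ) [NeZero N] : ww N ^ N = 1 := (ww_prim N).pow_eq_one

lemma ww_pow_mod (N : ℕ) [NeZero N] (j : ℕ) : ww N ^ j = ww N ^ (j % N) := by
  conv_lhs => rw [← Nat.div_add_mod j N]
  rw [pow_add, pow_mul, ww_pow_N, one_pow, one_mul]

lemma ww_pow_congr (N : ℕ) [NeZero N] {j k : ℕ} (h : j % N = k % N) :
    ww N ^ j = ww N ^ k := by rw [ww_pow_mod N j, ww_pow_mod N k, h]

lemma ww_mul_conj (N : ℕ) [NeZero N] (k : ℕ) :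
    ww N ^ k * (starRingEnd ℂ) (ww N ^ k) = 1 := by
  rw [map_pow, ← mul_pow]
  have h : (starRingEnd ℂ) (ww N) = Complex.exp (-(2 * Real.pi * Complex.I / N)) := by
    rw [ww, ← Complex.exp_conj]
    congr 1
    simp only [map_div₀, map_mul, Complex.conj_I, Complex.conj_ofReal, map_ofNat,
      Complex.conj_natCast]
    ring
  rw [h, ww, ← Complex.exp_add, add_neg_cancel, Complex.exp_zero, one_pow]

lemma geom_ww (N : ℕ) [NeZero N] (d k : ℕ) (hz : ww N ^ d ≠ 1) :
    ∑ x ∈ Finset.range k, ww N ^ (d * x) = (ww N ^ (d * k) - 1) / (ww N ^ d - 1) := by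
  have := geom_sum_eq hz k
  simp only [← pow_mul, mul_comm d] at this ⊢
  simpa [mul_comm] using this

lemma sum_ww_eq_zero (N : ℕ) [NeZero N] {d k : ℕ} (h1 : ¬ N ∣ d) (h2 : N ∣ d * k) :
    ∑ x ∈ Finset.range k, ww N ^ (d * x) = 0 := by
  have hz : ww N ^ d ≠ 1 := fun h => h1 ((ww_pow_eq_one_iff N d).mp h)
  rw [geom_ww N d k hz, (ww_pow_eq_one_iff N (d*k)).mpr h2, sub_self, zero_div]

lemma sum_ww_ne_zero (N : ℕ) [NeZero N] {d k : ℕ} (h : ¬ N ∣ d * k) :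
    ∑ x ∈ Finset.range k, ww N ^ (d * x) ≠ 0 := by
  have h1 : ¬ N ∣ d := fun hd => h (hd.mul_right k)
  have hz : ww N ^ d ≠ 1 := fun hh => h1 ((ww_pow_eq_one_iff N d).mp hh)
  rw [geom_ww N d k hz]
  exact div_ne_zero (sub_ne_zero.mpr fun hh => h ((ww_pow_eq_one_iff N (d*k)).mp hh))
    (sub_ne_zero.mpr hz)

lemma ww_sub_val (N : ℕ) [NeZero N] (s t : ZMod N) (d : ℕ) :
    ww N ^ (d * s.val) * (starRingEnd ℂ) (ww N ^ (d * t.val)) = ww N ^ (d * (s - t).val) := by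
  have key : ww N ^ (d * (s - t).val) * ww N ^ (d * t.val) = ww N ^ (d * s.val) := by
    rw [← pow_add, ← Nat.mul_add]
    apply ww_pow_congr
    have hst : (s - t) + t = s := by ring
    have h2 : ((s - t).val + t.val) ≡ s.val [MOD N] := by
      conv_rhs => rw [← hst]
      rw [ZMod.val_add]
      exact (Nat.mod_modEq _ _).symm
    exact Nat.ModEq.mul_left d h2
  calc ww N ^ (d * s.val) * (starRingEnd ℂ) (ww N ^ (d * t.val))
      = ww N ^ (d * (s - t).val) * (ww N ^ (d * t.val) * (starRingEnd ℂ) (ww N ^ (d * t.val))) := by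
        rw [← key]; ring
    _ = ww N ^ (d * (s - t).val) := by rw [ww_mul_conj, mul_one]

lemma ww_sub_val' (N : ℕ) [NeZero N] (s t : ZMod N) (d : ℕ) :
    ww N ^ (s.val * d) * (starRingEnd ℂ) (ww N ^ (t.val * d)) = ww N ^ ((s - t).val * d) := by
  simpa only [Nat.mul_comm] using ww_sub_val N s t d

lemma ww_add_val (N : ℕ) [NeZero N] (s t : ZMod N) (d : ℕ) :
    ww N ^ (d * (s + t).val) = ww N ^ (d * s.val) * ww N ^ (d * t.val) := by
  rw [← pow_add, ← Nat.mul_add]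
  apply ww_pow_congr
  exact Nat.ModEq.mul_left d (by rw [ZMod.val_add]; exact Nat.mod_modEq _ _)

/-! ### The product character -/

noncomputable def EE (A B : ℕ) (l x : ZMod A × ZMod B) : ℂ :=
  ww A ^ (l.1.val * x.1.val) * ww B ^ (l.2.val * x.2.val)

lemma e2_eq_EE (A B : ℕ) (l x : ZMod A × ZMod B) : e2 A B l x = EE A B l x := by
  unfold e2 EE ww
  rw [mul_add, Complex.exp_add]
  congr 1
  · rw [← Complex.exp_nat_mul]; congr 1; push_cast; ring
  · rw [← Complex.exp_nat_mul]; congr 1; push_cast; ring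

lemma EE_symm (A B : ℕ) (l x : ZMod A × ZMod B) : EE A B l x = EE A B x l := by
  simp only [EE, Nat.mul_comm]

lemma EE_zero_left (A B : ℕ) [NeZero A] [NeZero B] (x : ZMod A × ZMod B) :
    EE A B 0 x = 1 := by
  simp [EE, ZMod.val_zero]

lemma EE_sub_left (A B : ℕ) [NeZero A] [NeZero B] (l m x : ZMod A × ZMod B) :
    EE A B l x * (starRingEnd ℂ) (EE A B m x) = EE A B (l - m) x := by
  simp only [EE, map_mul, Prod.fst_sub, Prod.snd_sub]
  calc ww A ^ (l.1.val * x.1.val) * ww B ^ (l.2.val * x.2.val) *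
        ((starRingEnd ℂ) (ww A ^ (m.1.val * x.1.val)) * (starRingEnd ℂ) (ww B ^ (m.2.val * x.2.val)))
      = (ww A ^ (l.1.val * x.1.val) * (starRingEnd ℂ) (ww A ^ (m.1.val * x.1.val))) *
        (ww B ^ (l.2.val * x.2.val) * (starRingEnd ℂ) (ww B ^ (m.2.val * x.2.val))) := by ring
    _ = ww A ^ ((l.1 - m.1).val * x.1.val) * ww B ^ ((l.2 - m.2).val * x.2.val) := by
        rw [ww_sub_val', ww_sub_val']

lemma EE_sub_right (A B : ℕ) [NeZero A] [NeZero B] (l x y : ZMod A × ZMod B) :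
    EE A B l x * (starRingEnd ℂ) (EE A B l y) = EE A B l (x - y) := by
  simp only [EE, map_mul, Prod.fst_sub, Prod.snd_sub]
  calc ww A ^ (l.1.val * x.1.val) * ww B ^ (l.2.val * x.2.val) *
        ((starRingEnd ℂ) (ww A ^ (l.1.val * y.1.val)) * (starRingEnd ℂ) (ww B ^ (l.2.val * y.2.val)))
      = (ww A ^ (l.1.val * x.1.val) * (starRingEnd ℂ) (ww A ^ (l.1.val * y.1.val))) *
        (ww B ^ (l.2.val * x.2.val) * (starRingEnd ℂ) (ww B ^ (l.2.val * y.2.val))) := by ring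
    _ = ww A ^ (l.1.val * (x.1 - y.1).val) * ww B ^ (l.2.val * (x.2 - y.2).val) := by
        rw [ww_sub_val, ww_sub_val]

lemma EE_add_right (A B : ℕ) [NeZero A] [NeZero B] (l x y : ZMod A × ZMod B) :
    EE A B l (x + y) = EE A B l x * EE A B l y := by
  simp only [EE, Prod.fst_add, Prod.snd_add]
  rw [ww_add_val, ww_add_val]
  ring

/-! ### Sums over `ZMod` and cubes -/

lemma sum_zmod_val (N : ℕ) [NeZero N] (f : ℕ → ℂ) :
    ∑ g : ZMod N, f g.val = ∑ i ∈ Finset.range N, f i := by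
  apply Finset.sum_nbij' (i := fun g : ZMod N => g.val) (j := fun i : ℕ => (i : ZMod N))
  · intro g _; exact Finset.mem_range.mpr (ZMod.val_lt g)
  · intro i _; exact Finset.mem_univ _
  · intro g _; simp [ZMod.natCast_val, ZMod.cast_id]
  · intro i hi; exact ZMod.val_cast_of_lt (Finset.mem_range.mp hi)
  · intro g _; rfl

lemma cube2_injOn (A B a b : ℕ) (haA : a ≤ A) (hbB : b ≤ B) :
    Set.InjOn (fun v : Fin a × Fin b => (((v.1 : ℕ) : ZMod A), ((v.2 : ℕ) : ZMod B)))
      (Finset.univ : Finset (Fin a × Fin b)) := by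
  intro v _ v' _ h
  simp only [Prod.mk.injEq] at h
  have h1 : ((v.1 : ℕ) : ZMod A).val = ((v'.1 : ℕ) : ZMod A).val := by rw [h.1]
  have h2 : ((v.2 : ℕ) : ZMod B).val = ((v'.2 : ℕ) : ZMod B).val := by rw [h.2]
  rw [ZMod.val_cast_of_lt (lt_of_lt_of_le v.1.isLt haA),
      ZMod.val_cast_of_lt (lt_of_lt_of_le v'.1.isLt haA)] at h1
  rw [ZMod.val_cast_of_lt (lt_of_lt_of_le v.2.isLt hbB),
      ZMod.val_cast_of_lt (lt_of_lt_of_le v'.2.isLt hbB)] at h2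
  exact Prod.ext (Fin.ext h1) (Fin.ext h2)

lemma sum_cube2 (A B a b : ℕ) (haA : a ≤ A) (hbB : b ≤ B) (f : ZMod A × ZMod B → ℂ) :
    ∑ x ∈ cube2 A B a b, f x
      = ∑ v : Fin a × Fin b, f (((v.1 : ℕ) : ZMod A), ((v.2 : ℕ) : ZMod B)) :=
  Finset.sum_image fun v hv v' hv' h => cube2_injOn A B a b haA hbB hv hv' h

lemma card_cube2 (A B a b : ℕ) (haA : a ≤ A) (hbB : b ≤ B) :
    (cube2 A B a b).card = a * b := by
  rw [cube2, Finset.card_image_of_injOn (cube2_injOn A B a b haA hbB)]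
  simp

lemma mem_cube2_val (A B a b : ℕ) (haA : a ≤ A) (hbB : b ≤ B) {x : ZMod A × ZMod B}
    (hx : x ∈ cube2 A B a b) : x.1.val < a ∧ x.2.val < b := by
  rw [cube2, Finset.mem_image] at hx
  obtain ⟨v, -, rfl⟩ := hx
  constructor
  · rw [ZMod.val_cast_of_lt (lt_of_lt_of_le v.1.isLt haA)]; exact v.1.isLt
  · rw [ZMod.val_cast_of_lt (lt_of_lt_of_le v.2.isLt hbB)]; exact v.2.isLt

lemma tiling_sum {A B : ℕ} [NeZero A] [NeZero B] {E L : Finset (ZMod A × ZMod B)}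
    (htile : Tiles E L) (F : ZMod A × ZMod B → ℂ) :
    ∑ q ∈ E, ∑ l ∈ L, F (q + l) = ∑ g : ZMod A × ZMod B, F g := by
  rw [← Finset.sum_product']
  apply Finset.sum_nbij' (i := fun p : (ZMod A × ZMod B) × (ZMod A × ZMod B) => p.1 + p.2)
    (j := fun g => Classical.choose (htile g))
  · intro p _; exact Finset.mem_univ _
  · intro g _
    have hs := Classical.choose_spec (htile g)
    exact Finset.mem_product.mpr ⟨hs.1.1, hs.1.2.1⟩
  · intro p hp
    have hs := Classical.choose_spec (htile (p.1 + p.2))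
    have hmem := Finset.mem_product.mp hp
    exact (hs.2 p ⟨hmem.1, hmem.2, rfl⟩).symm
  · intro g _
    have hs := Classical.choose_spec (htile g)
    exact hs.1.2.2.symm
  · intro p _; rfl

/-! ### Arithmetic lemmas -/

lemma val_sub_not_dvd {N aa : ℕ} [NeZero N] (haa : aa ∣ N) {s t : ZMod N}
    (hs : s.val < aa) (ht : t.val < aa) (hst : s ≠ t) : ¬ aa ∣ (s - t).val := by
  intro hdvd
  have e1 : (((s - t).val : ℤ) : ZMod N) = (((s.val : ℤ) - (t.val : ℤ) : ℤ) : ZMod N) := by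
    push_cast
    simp [ZMod.natCast_val, ZMod.cast_id]
  have e2 : ((s - t).val : ℤ) ≡ ((s.val : ℤ) - (t.val : ℤ)) [ZMOD N] :=
    (ZMod.intCast_eq_intCast_iff _ _ _).mp e1
  have hNdvd : (N : ℤ) ∣ (((s - t).val : ℤ) - ((s.val : ℤ) - (t.val : ℤ))) := e2.symm.dvd
  have haa' : (aa : ℤ) ∣ (((s - t).val : ℤ) - ((s.val : ℤ) - (t.val : ℤ))) :=
    dvd_trans (Int.natCast_dvd_natCast.mpr haa) hNdvd
  have hd2 : (aa : ℤ) ∣ ((s.val : ℤ) - (t.val : ℤ)) := by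
    have hx : (aa : ℤ) ∣ ((s - t).val : ℤ) := Int.natCast_dvd_natCast.mpr hdvd
    exact (dvd_sub_right hx).mp haa'
  have hzero : (s.val : ℤ) - (t.val : ℤ) = 0 := by
    have h1 : (s.val : ℤ) < aa := by exact_mod_cast hs
    have h2 : (t.val : ℤ) < aa := by exact_mod_cast ht
    have h3 : (0 : ℤ) ≤ (s.val : ℤ) := Int.natCast_nonneg _
    have h4 : (0 : ℤ) ≤ (t.val : ℤ) := Int.natCast_nonneg _
    exact Int.eq_zero_of_abs_lt_dvd hd2 (abs_lt.mpr ⟨by omega, by omega⟩)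
  have : s.val = t.val := by omega
  exact hst (ZMod.val_injective N this)

lemma factor_ne_zero {N aa : ℕ} [NeZero N] (haa : aa ∣ N) (ha : 0 < aa) (s t : ZMod N)
    (hs : s.val < aa) (ht : t.val < aa) :
    ∑ u ∈ Finset.range (N / aa), ww N ^ ((s - t).val * u) ≠ 0 := by
  have hNpos : 0 < N := Nat.pos_of_ne_zero (NeZero.ne N)
  have hdiv : 0 < N / aa := Nat.div_pos (Nat.le_of_dvd hNpos haa) ha
  by_cases hst : s = t
  · subst hst
    simp only [sub_self, ZMod.val_zero, Nat.zero_mul, pow_zero]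
    rw [Finset.sum_const, Finset.card_range, nsmul_eq_mul, mul_one]
    exact (Nat.cast_ne_zero (R := ℂ)).mpr hdiv.ne'
  · apply sum_ww_ne_zero
    intro hdvd
    have hN : aa * (N / aa) = N := Nat.mul_div_cancel' haa
    have hdvd' : aa * (N / aa) ∣ (s - t).val * (N / aa) := by rw [hN]; exact hdvd
    exact val_sub_not_dvd haa hs ht hst ((Nat.mul_dvd_mul_iff_right hdiv).mp hdvd')

lemma coord_sum_zero {N : ℕ} [NeZero N] {d : ZMod N} (hd : d ≠ 0) :
    ∑ g : ZMod N, ww N ^ (d.val * g.val) = 0 := by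
  rw [sum_zmod_val N (fun i => ww N ^ (d.val * i))]
  apply sum_ww_eq_zero
  · intro hdvd
    have h1 : d.val < N := ZMod.val_lt d
    have h2 : d.val ≠ 0 := fun h => hd ((ZMod.val_eq_zero d).mp h)
    exact h2 (Nat.eq_zero_of_dvd_of_lt hdvd h1)
  · exact Dvd.intro_left _ rfl


lemma lamhat_eq_zero (A B a b : ℕ) [NeZero A] [NeZero B] (ha : 0 < a) (hb : 0 < b)
    (haA : a ∣ A) (hbB : b ∣ B) (L : Finset (ZMod A × ZMod B))
    (htile : Tiles (cube2 A B (A / a) (B / b)) L) {x y : ZMod A × ZMod B}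
    (hx1 : x.1.val < a) (hx2 : x.2.val < b) (hy1 : y.1.val < a) (hy2 : y.2.val < b)
    (hxy : x ≠ y) : ∑ l ∈ L, EE A B (x - y) l = 0 := by
  have hApos : 0 < A := Nat.pos_of_ne_zero (NeZero.ne A)
  have hBpos : 0 < B := Nat.pos_of_ne_zero (NeZero.ne B)
  set ξ : ZMod A × ZMod B := x - y with hξ
  -- full group sum vanishes
  have hfull : ∑ g : ZMod A × ZMod B, EE A B ξ g = 0 := by
    rw [Fintype.sum_prod_type]
    have hfac : ∑ g1 : ZMod A, ∑ g2 : ZMod B, EE A B ξ (g1, g2)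
        = (∑ g1 : ZMod A, ww A ^ (ξ.1.val * g1.val)) * (∑ g2 : ZMod B, ww B ^ (ξ.2.val * g2.val)) := by
      rw [Finset.sum_mul_sum]
      rfl
    rw [hfac]
    have hne : ξ ≠ 0 := sub_ne_zero.mpr hxy
    by_cases h1 : ξ.1 = 0
    · have h2 : ξ.2 ≠ 0 := fun h => hne (Prod.ext h1 h)
      rw [coord_sum_zero h2, mul_zero]
    · rw [coord_sum_zero h1, zero_mul]
  -- split via the tiling
  have hsplit : (∑ q ∈ cube2 A B (A / a) (B / b), EE A B ξ q) * (∑ l ∈ L, EE A B ξ l) = 0 := by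
    rw [Finset.sum_mul_sum]
    calc ∑ q ∈ cube2 A B (A / a) (B / b), ∑ l ∈ L, EE A B ξ q * EE A B ξ l
        = ∑ q ∈ cube2 A B (A / a) (B / b), ∑ l ∈ L, EE A B ξ (q + l) := by
          refine Finset.sum_congr rfl fun q _ => Finset.sum_congr rfl fun l _ => ?_
          rw [EE_add_right]
      _ = ∑ g : ZMod A × ZMod B, EE A B ξ g := tiling_sum htile _
      _ = 0 := hfull
  -- the dual-cube sum is nonzero
  have hS : (∑ q ∈ cube2 A B (A / a) (B / b), EE A B ξ q) ≠ 0 := by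
    rw [sum_cube2 A B (A / a) (B / b) (Nat.div_le_self A a) (Nat.div_le_self B b)]
    have hfac : ∑ v : Fin (A / a) × Fin (B / b),
          EE A B ξ (((v.1 : ℕ) : ZMod A), ((v.2 : ℕ) : ZMod B))
        = (∑ u : Fin (A / a), ww A ^ (ξ.1.val * ((u : ℕ) : ZMod A).val))
          * (∑ t : Fin (B / b), ww B ^ (ξ.2.val * ((t : ℕ) : ZMod B).val)) := by
      rw [Finset.sum_mul_sum, Fintype.sum_prod_type]
      rfl
    rw [hfac]
    apply mul_ne_zero
    · have : ∑ u : Fin (A / a), ww A ^ (ξ.1.val * ((u : ℕ) : ZMod A).val)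
          = ∑ i ∈ Finset.range (A / a), ww A ^ (ξ.1.val * i) := by
        rw [← Fin.sum_univ_eq_sum_range (fun i => ww A ^ (ξ.1.val * i)) (A / a)]
        refine Finset.sum_congr rfl fun u _ => ?_
        rw [ZMod.val_cast_of_lt (lt_of_lt_of_le u.isLt (Nat.div_le_self A a))]
      rw [this]
      have hfst : ξ.1 = x.1 - y.1 := rfl
      rw [show ξ.1.val = (x.1 - y.1).val by rw [hfst]]
      exact factor_ne_zero haA ha x.1 y.1 hx1 hy1
    · have : ∑ t : Fin (B / b), ww B ^ (ξ.2.val * ((t : ℕ) : ZMod B).val)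
          = ∑ i ∈ Finset.range (B / b), ww B ^ (ξ.2.val * i) := by
        rw [← Fin.sum_univ_eq_sum_range (fun i => ww B ^ (ξ.2.val * i)) (B / b)]
        refine Finset.sum_congr rfl fun t _ => ?_
        rw [ZMod.val_cast_of_lt (lt_of_lt_of_le t.isLt (Nat.div_le_self B b))]
      rw [this]
      have hsnd : ξ.2 = x.2 - y.2 := rfl
      rw [show ξ.2.val = (x.2 - y.2).val by rw [hsnd]]
      exact factor_ne_zero hbB hb x.2 y.2 hx2 hy2
  rcases mul_eq_zero.mp hsplit with h | h
  · exact absurd h hS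
  · exact h


lemma L_card (A B a b : ℕ) [NeZero A] [NeZero B] (ha : 0 < a) (hb : 0 < b)
    (haA : a ∣ A) (hbB : b ∣ B) (L : Finset (ZMod A × ZMod B))
    (htile : Tiles (cube2 A B (A / a) (B / b)) L) : L.card = a * b := by
  have hApos : 0 < A := Nat.pos_of_ne_zero (NeZero.ne A)
  have hBpos : 0 < B := Nat.pos_of_ne_zero (NeZero.ne B)
  have h := tiling_sum htile (fun _ => (1 : ℂ))
  simp only [Finset.sum_const, nsmul_eq_mul, mul_one, Finset.card_univ] at h
  rw [Fintype.card_prod, ZMod.card, ZMod.card,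
    card_cube2 A B (A / a) (B / b) (Nat.div_le_self A a) (Nat.div_le_self B b)] at h
  have hnat : (A / a) * (B / b) * L.card = A * B := by exact_mod_cast h
  have hA : a * (A / a) = A := Nat.mul_div_cancel' haA
  have hB : b * (B / b) = B := Nat.mul_div_cancel' hbB
  have hpos : 0 < (A / a) * (B / b) :=
    Nat.mul_pos (Nat.div_pos (Nat.le_of_dvd hApos haA) ha)
      (Nat.div_pos (Nat.le_of_dvd hBpos hbB) hb)
  apply Nat.eq_of_mul_eq_mul_left hpos
  calc (A / a) * (B / b) * L.card = A * B := hnat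
    _ = (A / a) * (B / b) * (a * b) := by
        conv_lhs => rw [← hA, ← hB]
        ring

noncomputable def DQ (A B a b : ℕ) (ξ : ZMod A × ZMod B) : ℂ :=
  ∑ x ∈ cube2 A B a b, EE A B ξ x

noncomputable def LHat (A B : ℕ) (L : Finset (ZMod A × ZMod B)) (ξ : ZMod A × ZMod B) : ℂ :=
  ∑ l ∈ L, EE A B ξ l

lemma DQ_mul_conj (A B a b : ℕ) [NeZero A] [NeZero B] (ξ : ZMod A × ZMod B) :
    DQ A B a b ξ * (starRingEnd ℂ) (DQ A B a b ξ)
      = ∑ z ∈ (cube2 A B a b) ×ˢ (cube2 A B a b), EE A B ξ (z.1 - z.2) := by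
  unfold DQ
  rw [map_sum, Finset.sum_mul_sum, ← Finset.sum_product']
  exact Finset.sum_congr rfl fun z _ => EE_sub_right A B ξ z.1 z.2

lemma LHat_mul_conj (A B : ℕ) [NeZero A] [NeZero B] (L : Finset (ZMod A × ZMod B))
    (ξ : ZMod A × ZMod B) :
    LHat A B L ξ * (starRingEnd ℂ) (LHat A B L ξ)
      = ∑ p ∈ L ×ˢ L, EE A B ξ (p.1 - p.2) := by
  unfold LHat
  rw [map_sum, Finset.sum_mul_sum, ← Finset.sum_product']
  exact Finset.sum_congr rfl fun p _ => EE_sub_right A B ξ p.1 p.2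

lemma DQ_eq_zero (A B a b : ℕ) [NeZero A] [NeZero B] (ha : 0 < a) (hb : 0 < b)
    (haA : a ∣ A) (hbB : b ∣ B) (L : Finset (ZMod A × ZMod B))
    (htile : Tiles (cube2 A B (A / a) (B / b)) L) {l m : ZMod A × ZMod B}
    (hl : l ∈ L) (hm : m ∈ L) (hlm : l ≠ m) : DQ A B a b (l - m) = 0 := by
  have hApos : 0 < A := Nat.pos_of_ne_zero (NeZero.ne A)
  have hBpos : 0 < B := Nat.pos_of_ne_zero (NeZero.ne B)
  have haA' : a ≤ A := Nat.le_of_dvd hApos haA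
  have hbB' : b ≤ B := Nat.le_of_dvd hBpos hbB
  have hQcard : (cube2 A B a b).card = a * b := card_cube2 A B a b haA' hbB'
  have hLcard : L.card = a * b := L_card A B a b ha hb haA hbB L htile
  have hLH0 : LHat A B L 0 = ((a * b : ℕ) : ℂ) := by
    unfold LHat
    rw [Finset.sum_congr rfl fun l' _ => EE_zero_left A B l', Finset.sum_const, hLcard]
    simp
  have hD0 : DQ A B a b 0 = ((a * b : ℕ) : ℂ) := by
    unfold DQ
    rw [Finset.sum_congr rfl fun x _ => EE_zero_left A B x, Finset.sum_const, hQcard]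
    simp
  -- the key identity
  have hkey : ∑ p ∈ L ×ˢ L, DQ A B a b (p.1 - p.2) * (starRingEnd ℂ) (DQ A B a b (p.1 - p.2))
      = ((a * b : ℕ) : ℂ) ^ 3 := by
    calc ∑ p ∈ L ×ˢ L, DQ A B a b (p.1 - p.2) * (starRingEnd ℂ) (DQ A B a b (p.1 - p.2))
        = ∑ p ∈ L ×ˢ L, ∑ z ∈ (cube2 A B a b) ×ˢ (cube2 A B a b),
            EE A B (p.1 - p.2) (z.1 - z.2) :=
          Finset.sum_congr rfl fun p _ => DQ_mul_conj A B a b _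
      _ = ∑ z ∈ (cube2 A B a b) ×ˢ (cube2 A B a b), ∑ p ∈ L ×ˢ L,
            EE A B (z.1 - z.2) (p.1 - p.2) := by
          rw [Finset.sum_comm]
          exact Finset.sum_congr rfl fun z _ => Finset.sum_congr rfl fun p _ =>
            EE_symm A B _ _
      _ = ∑ z ∈ (cube2 A B a b) ×ˢ (cube2 A B a b),
            LHat A B L (z.1 - z.2) * (starRingEnd ℂ) (LHat A B L (z.1 - z.2)) :=
          Finset.sum_congr rfl fun z _ => (LHat_mul_conj A B L _).symm
      _ = ∑ x ∈ cube2 A B a b, ∑ y ∈ cube2 A B a b,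
            LHat A B L (x - y) * (starRingEnd ℂ) (LHat A B L (x - y)) := by
          rw [Finset.sum_product]
      _ = ∑ x ∈ cube2 A B a b, ((a * b : ℕ) : ℂ) ^ 2 := by
          refine Finset.sum_congr rfl fun x hx => ?_
          rw [Finset.sum_eq_single_of_mem x hx]
          · rw [sub_self, hLH0]
            rw [Complex.conj_natCast]
            ring
          · intro y hy hyx
            have hxv := mem_cube2_val A B a b haA' hbB' hx
            have hyv := mem_cube2_val A B a b haA' hbB' hy
            have hLz : LHat A B L (x - y) = 0 := by
              unfold LHat
              exact lamhat_eq_zero A B a b ha hb haA hbB L htile hxv.1 hxv.2 hyv.1 hyv.2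
                (fun h => hyx (h.symm ▸ rfl))
            rw [hLz, zero_mul]
      _ = ((a * b : ℕ) : ℂ) ^ 3 := by
          rw [Finset.sum_const, hQcard, nsmul_eq_mul]
          push_cast
          ring
  -- pass to real parts
  have hreal : ∑ p ∈ L ×ˢ L, Complex.normSq (DQ A B a b (p.1 - p.2)) = ((a * b : ℕ) : ℝ) ^ 3 := by
    have hc : ((∑ p ∈ L ×ˢ L, Complex.normSq (DQ A B a b (p.1 - p.2)) : ℝ) : ℂ)
        = ((a * b : ℕ) : ℂ) ^ 3 := by
      rw [Complex.ofReal_sum, ← hkey]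
      exact Finset.sum_congr rfl fun p _ => (Complex.mul_conj _).symm
    exact_mod_cast hc
  have hnorm0 : Complex.normSq (DQ A B a b 0) = ((a * b : ℕ) : ℝ) ^ 2 := by
    rw [hD0]
    rw [show ((a * b : ℕ) : ℂ) = (((a * b : ℕ) : ℝ) : ℂ) by push_cast; ring,
      Complex.normSq_ofReal]
    ring
  -- split off the diagonal
  have hsum2 : ∑ l' ∈ L, ∑ m' ∈ L, Complex.normSq (DQ A B a b (l' - m'))
      = ((a * b : ℕ) : ℝ) ^ 3 := by
    rw [← hreal, Finset.sum_product]
  have hsplit : ∑ l' ∈ L, ∑ m' ∈ L, Complex.normSq (DQ A B a b (l' - m'))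
      = ((a * b : ℕ) : ℝ) ^ 3
        + ∑ l' ∈ L, ∑ m' ∈ L.erase l', Complex.normSq (DQ A B a b (l' - m')) := by
    have step : ∀ l' ∈ L, ∑ m' ∈ L, Complex.normSq (DQ A B a b (l' - m'))
        = Complex.normSq (DQ A B a b 0)
          + ∑ m' ∈ L.erase l', Complex.normSq (DQ A B a b (l' - m')) := by
      intro l' hl'
      rw [← Finset.add_sum_erase L _ hl', sub_self]
    rw [Finset.sum_congr rfl step, Finset.sum_add_distrib, Finset.sum_const, hnorm0, hLcard,
      nsmul_eq_mul]
    push_cast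
    ring_nf
  have hE : ∑ l' ∈ L, ∑ m' ∈ L.erase l', Complex.normSq (DQ A B a b (l' - m')) = 0 := by
    rw [hsum2] at hsplit
    linarith
  have h1 := (Finset.sum_eq_zero_iff_of_nonneg
    (fun l' _ => Finset.sum_nonneg fun m' _ => Complex.normSq_nonneg _)).mp hE l hl
  have h2 := (Finset.sum_eq_zero_iff_of_nonneg
    (fun m' _ => Complex.normSq_nonneg _)).mp h1 m (Finset.mem_erase.mpr ⟨Ne.symm hlm, hm⟩)
  exact Complex.normSq_eq_zero.mp h2

/-- If the dual cube `[A/a]×[B/b]` tiles `ℤ_A × ℤ_B` with translates `Λ`, then `Λ` is a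
spectrum of the cube `[a]×[b]`. -/
theorem dual_tiling_implies_spectrum (A B a b : ℕ) [NeZero A] [NeZero B]
    (ha : 0 < a) (hb : 0 < b) (haA : a ∣ A) (hbB : b ∣ B)
    (L : Finset (ZMod A × ZMod B)) (htile : Tiles (cube2 A B (A / a) (B / b)) L) :
    IsSpectrum2 A B (cube2 A B a b) L := by
  have hApos : 0 < A := Nat.pos_of_ne_zero (NeZero.ne A)
  have hBpos : 0 < B := Nat.pos_of_ne_zero (NeZero.ne B)
  have haA' : a ≤ A := Nat.le_of_dvd hApos haA
  have hbB' : b ≤ B := Nat.le_of_dvd hBpos hbB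
  constructor
  · rw [card_cube2 A B a b haA' hbB']
    exact L_card A B a b ha hb haA hbB L htile
  · intro l hl m hm hlm
    have hz := DQ_eq_zero A B a b ha hb haA hbB L htile hl hm hlm
    calc ∑ x ∈ cube2 A B a b, e2 A B l x * (starRingEnd ℂ) (e2 A B m x)
        = ∑ x ∈ cube2 A B a b, EE A B (l - m) x :=
          Finset.sum_congr rfl fun x _ => by rw [e2_eq_EE, e2_eq_EE, EE_sub_left]
      _ = 0 := hz
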